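/- Let p be a prime, r ≥ 3, p = 2r+1, and ω a primitive p-th root of unity in ℂ. Define ch(x) = ∏_{i=1}^{r-1} (x^i + x^{-i}). Then either ch(ω) = ω^r + ω^{r-2} + ⋯ + ω^{-r} or ch(ω) = ω^{r-1} + ω^{r-3} + ⋯ + ω^{-(r-1)}. -/

import Mathlib

open Finset Polynomial

lemma prod_one_add_primroot {p : ℕ} (hp : p.Prime) (hodd : Odd p) {ζ : ℂ}
    (hζ : IsPrimitiveRoot ζ p) : ∏ i ∈ Finset.range (p - 1), (1 + ζ ^ (i + 1)) = 1 := by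
  have hpos : 0 < p := hp.pos
  have h := X_pow_sub_C_eq_prod hζ hpos (one_pow p)
  have h2 := congrArg (Polynomial.eval (-1 : ℂ)) h
  simp only [eval_sub, eval_pow, eval_X, eval_C, eval_prod, mul_one] at h2
  rw [hodd.neg_one_pow] at h2
  have h3 : ∏ i ∈ Finset.range p, (-1 - ζ ^ i) =
      (∏ _i ∈ Finset.range p, (-1 : ℂ)) * ∏ i ∈ Finset.range p, (1 + ζ ^ i) := by
    rw [← Finset.prod_mul_distrib]
    exact Finset.prod_congr rfl fun i _ => by ring
  rw [h3, Finset.prod_const, Finset.card_range, hodd.neg_one_pow] at h2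
  have h4 : ∏ i ∈ Finset.range p, (1 + ζ ^ i) = 2 := by linear_combination h2
  obtain ⟨q, hq⟩ : ∃ q, p = q + 1 := ⟨p - 1, by omega⟩
  subst hq
  rw [Finset.prod_range_succ'] at h4
  simp only [pow_zero] at h4
  have : (1 : ℂ) + 1 = 2 := by norm_num
  rw [this] at h4
  have h5 : (∏ i ∈ Finset.range q, (1 + ζ ^ (i + 1))) * 2 = 1 * 2 := by
    rw [h4]; ring
  simpa using mul_right_cancel₀ (two_ne_zero) h5

/-- Let `p = 2r+1` be prime with `r ≥ 3`, and `ω` a primitive `p`-th root of unity in `ℂ`.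
With `ch(x) = ∏_{i=1}^{r-1} (x^i + x^{-i})`, either
`ch(ω) = ω^r + ω^(r-2) + ⋯ + ω^(-r)` or `ch(ω) = ω^(r-1) + ω^(r-3) + ⋯ + ω^(-(r-1))`. -/
theorem halfspin_char_eval (p r : ℕ) (hp : p.Prime) (hr : 3 ≤ r) (hpr : p = 2 * r + 1)
    (ω : ℂ) (hω : IsPrimitiveRoot ω p) :
    (∏ i ∈ Finset.Icc 1 (r - 1), (ω ^ (i : ℤ) + ω ^ (-(i : ℤ))))
        = ∑ j ∈ Finset.range (r + 1), ω ^ ((r : ℤ) - 2 * j) ∨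
    (∏ i ∈ Finset.Icc 1 (r - 1), (ω ^ (i : ℤ) + ω ^ (-(i : ℤ))))
        = ∑ j ∈ Finset.range r, ω ^ ((r : ℤ) - 1 - 2 * j) := by
  have h0 : ω ≠ 0 := hω.ne_zero (by omega)
  have hp1 : ω ^ p = 1 := hω.pow_eq_one
  have hzp : ω ^ ((p : ℕ) : ℤ) = 1 := by rw [zpow_natCast, hp1]
  have hzp' : ω ^ ((2 * r + 1 : ℕ) : ℤ) = 1 := by rw [← hpr]; exact hzp
  -- ω is not a low-order root
  have hord : ∀ m : ℕ, 0 < m → m < p → ω ^ m ≠ 1 := fun m hm hmp h =>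
    absurd (Nat.le_of_dvd hm (hω.dvd_of_pow_eq_one m h)) (by omega)
  have h1ω : (1 : ℂ) + ω ≠ 0 := by
    intro h
    have hω1 : ω = -1 := by linear_combination h
    have : ω ^ 2 = 1 := by rw [hω1]; ring
    exact hord 2 (by norm_num) (by omega) this
  have hx1 : ω ^ (-2 : ℤ) ≠ 1 := by
    intro h
    have h2 : ω ^ (2 : ℕ) = 1 := by
      have : (ω ^ ((2:ℕ) : ℤ))⁻¹ = 1 := by rw [← zpow_neg]; exact_mod_cast h
      rw [inv_eq_one] at this; rwa [zpow_natCast] at this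
    exact hord 2 (by norm_num) (by omega) h2
  have hd0 : ω ^ r * (1 + ω) ≠ 0 := mul_ne_zero (pow_ne_zero r h0) (fun h => h1ω (by linear_combination h))
  -- geometric sum computations
  have hterm : ∀ (a : ℤ) (j : ℕ), ω ^ (a - 2 * (j:ℤ)) = ω ^ a * (ω ^ (-2 : ℤ)) ^ j := by
    intro a j
    rw [sub_eq_add_neg, zpow_add₀ h0, ← zpow_natCast (ω ^ (-2:ℤ)) j, ← zpow_mul, neg_mul]
  have hgeom := geom_sum_eq hx1
  have hxr1 : (ω ^ (-2:ℤ)) ^ (r+1) = ω⁻¹ := by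
    rw [← zpow_natCast (ω ^ (-2:ℤ)) (r+1), ← zpow_mul]
    have he : (-2:ℤ) * ((r+1 : ℕ) : ℤ) = -((2*r+1 : ℕ) : ℤ) + (-1) := by push_cast; ring
    rw [he, zpow_add₀ h0, zpow_neg, hzp', inv_one, one_mul, zpow_neg, zpow_one]
  have hxr2 : (ω ^ (-2:ℤ)) ^ r = ω := by
    rw [← zpow_natCast (ω ^ (-2:ℤ)) r, ← zpow_mul]
    have he : (-2:ℤ) * ((r : ℕ) : ℤ) = -((2*r+1 : ℕ) : ℤ) + 1 := by push_cast; ring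
    rw [he, zpow_add₀ h0, zpow_neg, hzp', inv_one, one_mul, zpow_one]
  have hp21 : ω ^ (2 * r + 1) = 1 := by rw [← hpr]; exact hp1
  have hm2 : ω ^ (-2 : ℤ) = ((ω ^ 2)⁻¹ : ℂ) := by
    rw [show (-2 : ℤ) = -((2:ℕ):ℤ) by norm_num, zpow_neg, zpow_natCast]
  have hden : ((ω : ℂ) ^ 2)⁻¹ - 1 ≠ 0 := by rw [← hm2]; exact sub_ne_zero.mpr hx1
  have hω1 : ω ≠ 1 := by
    intro h
    exact hord 1 one_pos (by omega) (by rw [h]; ring)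
  have hc3 : ω - ω ^ 3 ≠ 0 := by
    have he : ω - ω ^ 3 = ω * (1 - ω) * (1 + ω) := by ring
    rw [he]
    exact mul_ne_zero (mul_ne_zero h0 (sub_ne_zero.mpr (Ne.symm hω1))) h1ω
  have hS1 : (∑ j ∈ Finset.range (r + 1), ω ^ ((r : ℤ) - 2 * j)) * (ω ^ r * (1 + ω)) = 1 := by
    simp_rw [hterm (r:ℤ)]
    rw [← Finset.mul_sum, hgeom (r+1), hxr1, zpow_natCast, hm2]
    field_simp
    ring_nf
    field_simp [hc3, show (1:ℂ) - ω ^ 2 ≠ 0 from fun h => hden (by rw [show ω ^ 2 = 1 by linear_combination -h]; norm_num)]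
    linear_combination hp21
  have hS2 : (∑ j ∈ Finset.range r, ω ^ ((r : ℤ) - 1 - 2 * j)) * (ω ^ r * (1 + ω)) = -1 := by
    have hterm2 : ∀ j : ℕ, ω ^ ((r : ℤ) - 1 - 2 * (j:ℤ)) = ω ^ ((r:ℤ) - 1) * (ω ^ (-2 : ℤ)) ^ j := by
      intro j
      rw [← hterm ((r:ℤ) - 1) j]
    simp_rw [hterm2]
    rw [← Finset.mul_sum, hgeom r, hxr2, hm2]
    have hzr1 : ω ^ ((r:ℤ) - 1) = ω ^ r * ω⁻¹ := by
      rw [sub_eq_add_neg, zpow_add₀ h0, zpow_natCast, zpow_neg, zpow_one]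
    rw [hzr1]
    field_simp
    ring_nf
    field_simp [hc3, show (1:ℂ) - ω ^ 2 ≠ 0 from fun h => hden (by rw [show ω ^ 2 = 1 by linear_combination -h]; norm_num)]
    linear_combination (ω ^ 2 - 1) * hp21

  have hshift : ∀ a : ℤ, ω ^ (a + ((2 * r + 1 : ℕ) : ℤ)) = ω ^ a := fun a => by
    rw [zpow_add₀ h0, hzp', mul_one]
  have gsym : ∀ i : ℕ, i ≤ 2 * r →
      ω ^ ((2 * r + 1 - i : ℕ) : ℤ) + ω ^ (-((2 * r + 1 - i : ℕ) : ℤ))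
        = ω ^ (i : ℤ) + ω ^ (-(i : ℤ)) := by
    intro i hi
    have hcast : ((2 * r + 1 - i : ℕ) : ℤ) = ((2 * r + 1 : ℕ) : ℤ) - (i : ℤ) := by omega
    have e1 : ω ^ (((2 * r + 1 : ℕ) : ℤ) - (i : ℤ)) = ω ^ (-(i : ℤ)) := by
      rw [← hshift (-(i : ℤ))]
      congr 1
      ring
    have e2 : ω ^ ((i : ℤ) - ((2 * r + 1 : ℕ) : ℤ)) = ω ^ (i : ℤ) := by
      rw [← hshift ((i : ℤ) - ((2 * r + 1 : ℕ) : ℤ))]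
      congr 1
      ring
    have e3 : -(((2 * r + 1 : ℕ) : ℤ) - (i : ℤ)) = (i : ℤ) - ((2 * r + 1 : ℕ) : ℤ) := by ring
    rw [hcast, e3, e1, e2, add_comm]
  have hP : ((∏ i ∈ Finset.Icc 1 (r - 1), (ω ^ (i : ℤ) + ω ^ (-(i : ℤ)))) * (ω ^ r * (1 + ω))) ^ 2
      = 1 := by
    have hIcc : Finset.Icc 1 (r - 1) = Finset.Ico 1 r := by
      rw [← Finset.Ico_add_one_right_eq_Icc]
      congr 1
      omega
    rw [hIcc, Finset.prod_Ico_eq_prod_range]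
    have hgr : (ω : ℂ) ^ r * (1 + ω)
        = ω ^ ((1 + (r - 1) : ℕ) : ℤ) + ω ^ (-((1 + (r - 1) : ℕ) : ℤ)) := by
      have h1 : (1 + (r - 1) : ℕ) = r := by omega
      rw [h1]
      have e2 : ω ^ (-(r : ℤ)) = ω ^ ((r : ℤ) + 1) := by
        rw [← hshift (-(r : ℤ))]
        congr 1
        push_cast
        ring
      rw [e2, zpow_add₀ h0, zpow_one, zpow_natCast]
      ring
    rw [hgr,
      ← Finset.prod_range_succ (fun i => ω ^ ((1 + i : ℕ) : ℤ) + ω ^ (-((1 + i : ℕ) : ℤ))) (r - 1)]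
    have hr1 : r - 1 + 1 = r := by omega
    rw [hr1]
    have hsplit := Finset.prod_range_add
      (fun i => ω ^ ((1 + i : ℕ) : ℤ) + ω ^ (-((1 + i : ℕ) : ℤ))) r r
    have hrefl : (∏ i ∈ Finset.range r, (ω ^ ((1 + (r + i) : ℕ) : ℤ) + ω ^ (-((1 + (r + i) : ℕ) : ℤ))))
        = ∏ i ∈ Finset.range r, (ω ^ ((1 + i : ℕ) : ℤ) + ω ^ (-((1 + i : ℕ) : ℤ))) := by
      have hpt : ∀ i ∈ Finset.range r,
          (ω ^ ((1 + (r + i) : ℕ) : ℤ) + ω ^ (-((1 + (r + i) : ℕ) : ℤ)))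
            = ω ^ ((1 + (r - 1 - i) : ℕ) : ℤ) + ω ^ (-((1 + (r - 1 - i) : ℕ) : ℤ)) := by
        intro i hi
        rw [Finset.mem_range] at hi
        have h1 : 1 + (r + i) = 2 * r + 1 - (1 + (r - 1 - i)) := by omega
        rw [h1]
        exact gsym _ (by omega)
      rw [Finset.prod_congr rfl hpt]
      exact Finset.prod_range_reflect
        (fun j => ω ^ ((1 + j : ℕ) : ℤ) + ω ^ (-((1 + j : ℕ) : ℤ))) r
    have hbig : (∏ i ∈ Finset.range r, (ω ^ ((1 + i : ℕ) : ℤ) + ω ^ (-((1 + i : ℕ) : ℤ)))) ^ 2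
        = ∏ i ∈ Finset.range (r + r), (ω ^ ((1 + i : ℕ) : ℤ) + ω ^ (-((1 + i : ℕ) : ℤ))) := by
      rw [hsplit, hrefl, sq]
    rw [hbig]
    have hcop : Nat.Coprime 2 p :=
      ((Nat.Prime.coprime_iff_not_dvd hp).mpr
        (fun h => by have := Nat.le_of_dvd (by norm_num) h; omega)).symm
    have hζ : IsPrimitiveRoot (ω ^ 2) p := hω.pow_of_coprime 2 hcop
    have hodd : Odd p := ⟨r, hpr⟩
    have hfull := prod_one_add_primroot hp hodd hζ
    have hpt2 : ∀ i : ℕ,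
        (ω ^ ((1 + i : ℕ) : ℤ) + ω ^ (-((1 + i : ℕ) : ℤ))) * ω ^ (1 + i)
          = 1 + (ω ^ 2) ^ (i + 1) := by
      intro i
      rw [zpow_neg, zpow_natCast]
      have hne : ω ^ (1 + i) ≠ 0 := pow_ne_zero _ h0
      field_simp
      ring
    have hprodmul :
        (∏ i ∈ Finset.range (r + r), (ω ^ ((1 + i : ℕ) : ℤ) + ω ^ (-((1 + i : ℕ) : ℤ))))
          * ∏ i ∈ Finset.range (r + r), ω ^ (1 + i)
        = ∏ i ∈ Finset.range (r + r), (1 + (ω ^ 2) ^ (i + 1)) := by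
      rw [← Finset.prod_mul_distrib]
      exact Finset.prod_congr rfl fun i _ => hpt2 i
    have hpow : (∏ i ∈ Finset.range (r + r), ω ^ (1 + i)) = 1 := by
      rw [Finset.prod_pow_eq_pow_sum]
      have e : ∑ i ∈ Finset.range (r + r), (1 + i) = ∑ i ∈ Finset.range (r + r + 1), i := by
        rw [Finset.sum_range_succ']
        simp [add_comm]
      have h2 := Finset.sum_range_id_mul_two (r + r + 1)
      have h4 : (∑ i ∈ Finset.range (r + r), (1 + i)) * 2 = (2 * r + 1) * r * 2 := by
        rw [e, h2, Nat.add_sub_cancel]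
        ring
      have hsum := Nat.eq_of_mul_eq_mul_right (by norm_num : 0 < 2) h4
      rw [hsum, pow_mul, hp21, one_pow]
    have hone : ∏ i ∈ Finset.range (r + r), (1 + (ω ^ 2) ^ (i + 1)) = 1 := by
      have hp1r : p - 1 = r + r := by omega
      rw [← hp1r]
      exact hfull
    rw [hpow, mul_one, hone] at hprodmul
    exact hprodmul
  -- combine
  set P := (∏ i ∈ Finset.Icc 1 (r - 1), (ω ^ (i : ℤ) + ω ^ (-(i : ℤ)))) with hPdef
  set d := ω ^ r * (1 + ω) with hddef
  have hcase : (P * d - 1) * (P * d + 1) = 0 := by linear_combination hP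
  rcases mul_eq_zero.mp hcase with h | h
  · left
    apply mul_right_cancel₀ hd0
    rw [hS1]; linear_combination h
  · right
    apply mul_right_cancel₀ hd0
    rw [hS2]; linear_combination h
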